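/- Suppose 𝒜 satisfies RIP(2r, δ). Then for every X, D ∈ ℝ^{n×r} and every α > 0, f_c(X − αD) ≤ f_c(X) − α⟨G, D⟩ + (α²/2)·Q(D) + (1+δ)·α³·‖D‖_F²·( 2‖DXᵀ + XDᵀ‖_F + α‖D‖_F² ), where G = ∇f_c(X) = (4/m) Σ_{i=1}^m ⟨A_i, XXᵀ − M*⟩ A_i X and Q(D) = (2/m)( ‖𝒜(XDᵀ + DXᵀ)‖² + 2⟨𝒜(XXᵀ − M*), 𝒜(DDᵀ)⟩ ). -/

import Mathlib

open Matrix BigOperators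

noncomputable section

/-- Frobenius inner product `⟨A, B⟩ = tr(Aᵀ B)`. -/
def finner {a b : ℕ} (A B : Matrix (Fin a) (Fin b) ℝ) : ℝ := (Aᵀ * B).trace

/-- Frobenius norm. -/
def fnorm {a b : ℕ} (A : Matrix (Fin a) (Fin b) ℝ) : ℝ :=
  Real.sqrt (∑ i, ∑ j, (A i j) ^ 2)

/-- Euclidean norm on ℝ^m. -/
def vnorm {m : ℕ} (v : Fin m → ℝ) : ℝ := Real.sqrt (∑ i, (v i) ^ 2)

/-- Euclidean inner product on ℝ^m. -/
def vinner {m : ℕ} (v w : Fin m → ℝ) : ℝ := ∑ i, v i * w i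

/-- Measurement operator 𝒜(M)_i = ⟨A_i, M⟩. -/
def calA {n m : ℕ} (A : Fin m → Matrix (Fin n) (Fin n) ℝ)
    (M : Matrix (Fin n) (Fin n) ℝ) : Fin m → ℝ :=
  fun i => finner (A i) M

/-- Restricted isometry property with parameters (k, δ). -/
def RIP {n m : ℕ} (A : Fin m → Matrix (Fin n) (Fin n) ℝ) (k : ℕ) (δ : ℝ) : Prop :=
  0 ≤ δ ∧ δ < 1 ∧ ∀ M : Matrix (Fin n) (Fin n) ℝ, M.rank ≤ k →
    (1 - δ) * fnorm M ^ 2 ≤ (1 / (m : ℝ)) * vnorm (calA A M) ^ 2 ∧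
    (1 / (m : ℝ)) * vnorm (calA A M) ^ 2 ≤ (1 + δ) * fnorm M ^ 2

/-- Noiseless loss. -/
def fc {n m r : ℕ} (A : Fin m → Matrix (Fin n) (Fin n) ℝ)
    (Mstar : Matrix (Fin n) (Fin n) ℝ) (X : Matrix (Fin n) (Fin r) ℝ) : ℝ :=
  (1 / (m : ℝ)) * vnorm (calA A (X * Xᵀ - Mstar)) ^ 2

/-- Noisy loss. -/
def fnoisy {n m r : ℕ} (A : Fin m → Matrix (Fin n) (Fin n) ℝ) (y : Fin m → ℝ)
    (X : Matrix (Fin n) (Fin r) ℝ) : ℝ :=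
  (1 / (m : ℝ)) * vnorm (fun i => calA A (X * Xᵀ) i - y i) ^ 2

/-- Gradient of the noisy loss. -/
def gradf {n m r : ℕ} (A : Fin m → Matrix (Fin n) (Fin n) ℝ) (y : Fin m → ℝ)
    (X : Matrix (Fin n) (Fin r) ℝ) : Matrix (Fin n) (Fin r) ℝ :=
  (4 / (m : ℝ)) • ∑ i, (finner (A i) (X * Xᵀ) - y i) • (A i * X)

/-- Gradient of the noiseless loss. -/
def gradfc {n m r : ℕ} (A : Fin m → Matrix (Fin n) (Fin n) ℝ)
    (Mstar : Matrix (Fin n) (Fin n) ℝ) (X : Matrix (Fin n) (Fin r) ℝ) :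
    Matrix (Fin n) (Fin r) ℝ :=
  (4 / (m : ℝ)) • ∑ i, finner (A i) (X * Xᵀ - Mstar) • (A i * X)

/-- Spectral (operator) norm. -/
def specNorm {n : ℕ} (B : Matrix (Fin n) (Fin n) ℝ) : ℝ :=
  sSup {c | ∃ v : Fin n → ℝ, vnorm v ≤ 1 ∧ c = vnorm (B.mulVec v)}

open scoped Classical in
/-- positive semidefinite square root (junk value 0 if not PSD). -/
def matSqrt {k : ℕ} (P : Matrix (Fin k) (Fin k) ℝ) : Matrix (Fin k) (Fin k) ℝ :=
  if h : P.PosSemidef then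
    h.1.eigenvectorUnitary.1 * diagonal ((↑) ∘ (√·) ∘ h.1.eigenvalues) *
      (star h.1.eigenvectorUnitary : Matrix (Fin k) (Fin k) ℝ)
  else 0

/-- P-norm. -/
def pnorm {a k : ℕ} (P : Matrix (Fin k) (Fin k) ℝ) (X : Matrix (Fin a) (Fin k) ℝ) : ℝ :=
  fnorm (X * matSqrt P)

/-- dual P-norm. -/
def pdnorm {a k : ℕ} (P : Matrix (Fin k) (Fin k) ℝ) (X : Matrix (Fin a) (Fin k) ℝ) : ℝ :=
  fnorm (X * (matSqrt P)⁻¹)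

/-- the preconditioner matrix XᵀX + ηI. -/
def Pmat {n r : ℕ} (X : Matrix (Fin n) (Fin r) ℝ) (η : ℝ) : Matrix (Fin r) (Fin r) ℝ :=
  Xᵀ * X + η • 1

/-- k-th largest eigenvalue (1-indexed) of a Hermitian matrix. -/
def lamK {n : ℕ} {M : Matrix (Fin n) (Fin n) ℝ} (hM : M.IsHermitian) (k : ℕ) : ℝ :=
  (((List.ofFn hM.eigenvalues).insertionSort (· ≥ ·)).getD (k - 1) 0)


lemma vnorm_sq {m : ℕ} (v : Fin m → ℝ) : vnorm v ^ 2 = ∑ i, v i ^ 2 :=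
  Real.sq_sqrt (Finset.sum_nonneg fun i _ => sq_nonneg _)

lemma fnorm_sq' {a b : ℕ} (M : Matrix (Fin a) (Fin b) ℝ) :
    fnorm M ^ 2 = ∑ i, ∑ j, M i j ^ 2 :=
  Real.sq_sqrt (by positivity)

lemma fnorm_nonneg' {a b : ℕ} (M : Matrix (Fin a) (Fin b) ℝ) : 0 ≤ fnorm M :=
  Real.sqrt_nonneg _

lemma finner_smul_left {a b : ℕ} (s : ℝ) (P N : Matrix (Fin a) (Fin b) ℝ) :
    finner (s • P) N = s * finner P N := by
  simp [finner, Matrix.transpose_smul, Matrix.smul_mul]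

lemma finner_sum_left {a b : ℕ} {ι : Type*} (s : Finset ι)
    (P : ι → Matrix (Fin a) (Fin b) ℝ) (N : Matrix (Fin a) (Fin b) ℝ) :
    finner (∑ i ∈ s, P i) N = ∑ i ∈ s, finner (P i) N := by
  simp [finner, Matrix.transpose_sum, Matrix.sum_mul, Matrix.trace_sum]

lemma finner_sym2 {n r : ℕ} (A : Matrix (Fin n) (Fin n) ℝ) (hA : Aᵀ = A)
    (X D : Matrix (Fin n) (Fin r) ℝ) :
    finner A (X * Dᵀ + D * Xᵀ) = 2 * finner (A * X) D := by
  have h2 : (Aᵀ * (D * Xᵀ)).trace = ((A * X)ᵀ * D).trace := by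
    calc (Aᵀ * (D * Xᵀ)).trace = ((D * Xᵀ) * Aᵀ).trace := Matrix.trace_mul_comm _ _
      _ = (D * (Xᵀ * Aᵀ)).trace := by rw [Matrix.mul_assoc]
      _ = ((Xᵀ * Aᵀ) * D).trace := Matrix.trace_mul_comm _ _
      _ = ((A * X)ᵀ * D).trace := by rw [Matrix.transpose_mul]
  have h1 : (Aᵀ * (X * Dᵀ)).trace = ((A * X)ᵀ * D).trace := by
    calc (Aᵀ * (X * Dᵀ)).trace = ((Aᵀ * X) * Dᵀ).trace := by rw [Matrix.mul_assoc]
      _ = (Dᵀ * (Aᵀ * X)).trace := Matrix.trace_mul_comm _ _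
      _ = ((Dᵀ * (Aᵀ * X))ᵀ).trace := (Matrix.trace_transpose _).symm
      _ = ((A * X)ᵀ * D).trace := by
            rw [Matrix.transpose_mul, Matrix.transpose_transpose, Matrix.transpose_mul,
              Matrix.transpose_transpose, Matrix.transpose_mul, hA]
  simp only [finner, Matrix.mul_add, Matrix.trace_add, h1, h2]
  ring

lemma fnorm_mul_transpose_le {n r : ℕ} (D : Matrix (Fin n) (Fin r) ℝ) :
    fnorm (D * Dᵀ) ≤ fnorm D ^ 2 := by
  have ht : (0:ℝ) ≤ fnorm D ^ 2 := by positivity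
  rw [fnorm, show fnorm D ^ 2 = Real.sqrt ((fnorm D ^ 2) ^ 2) from (Real.sqrt_sq ht).symm]
  apply Real.sqrt_le_sqrt
  rw [fnorm_sq']
  calc ∑ i, ∑ j, ((D * Dᵀ) i j) ^ 2
      ≤ ∑ i, ∑ j, (∑ k, D i k ^ 2) * (∑ k, D j k ^ 2) := by
        apply Finset.sum_le_sum; intro i _
        apply Finset.sum_le_sum; intro j _
        rw [Matrix.mul_apply]
        simpa [Matrix.transpose_apply] using
          Finset.sum_mul_sq_le_sq_mul_sq Finset.univ (fun k => D i k) (fun k => D j k)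
    _ = (∑ i, ∑ j, D i j ^ 2) ^ 2 := by
        rw [← Finset.sum_mul_sum, sq]

set_option maxHeartbeats 2000000 in
/-- fourth-order descent lemma under RIP. -/
theorem descent_lemma {n m r rstar : ℕ} (hn : 0 < n) (hm : 0 < m)
    (hrstar : 0 < rstar) (hrr : rstar ≤ r) {δ : ℝ}
    (A : Fin m → Matrix (Fin n) (Fin n) ℝ) (hA : ∀ i, (A i).IsHermitian)
    (hRIP : RIP A (2 * r) δ)
    (Mstar : Matrix (Fin n) (Fin n) ℝ) (hM : Mstar.PosSemidef)
    (hrank : Mstar.rank = rstar)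
    (X D : Matrix (Fin n) (Fin r) ℝ) (α : ℝ) (hα : 0 < α) :
    fc A Mstar (X - α • D) ≤
      fc A Mstar X - α * finner (gradfc A Mstar X) D
        + (α ^ 2 / 2) *
          ((2 / (m : ℝ)) * (vnorm (calA A (X * Dᵀ + D * Xᵀ)) ^ 2
            + 2 * vinner (calA A (X * Xᵀ - Mstar)) (calA A (D * Dᵀ))))
        + (1 + δ) * α ^ 3 * fnorm D ^ 2 *
          (2 * fnorm (D * Xᵀ + X * Dᵀ) + α * fnorm D ^ 2) := by
  obtain ⟨hd0, hd1, hrip⟩ := hRIP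
  have hmR : (0:ℝ) < (m:ℝ) := by exact_mod_cast hm
  set E := X * Xᵀ - Mstar with hE
  set B := X * Dᵀ + D * Xᵀ with hB
  set C := D * Dᵀ with hC
  set a : Fin m → ℝ := calA A E with ha
  set b : Fin m → ℝ := calA A B with hb
  set c : Fin m → ℝ := calA A C with hc
  set sa := ∑ i, a i ^ 2 with hsa
  set sb := ∑ i, b i ^ 2 with hsb
  set sc := ∑ i, c i ^ 2 with hsc
  set sab := ∑ i, a i * b i with hsab
  set sac := ∑ i, a i * c i with hsac
  set sbc := ∑ i, b i * c i with hsbc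
  set FB := fnorm B with hFB
  set FD := fnorm D with hFD
  clear_value E B C a b c sa sb sc sab sac sbc FB FD
  -- matrix identity
  have hmat : (X - α • D) * (X - α • D)ᵀ - Mstar = E - α • B + (α ^ 2) • C := by
    rw [hE, hB, hC]
    simp only [Matrix.transpose_sub, Matrix.transpose_smul, Matrix.sub_mul, Matrix.mul_sub,
      Matrix.smul_mul, Matrix.mul_smul]
    module
  have hcal : ∀ i, calA A ((X - α • D) * (X - α • D)ᵀ - Mstar) i
      = a i - α * b i + α ^ 2 * c i := by
    intro i
    rw [hmat, ha, hb, hc]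
    simp [calA, finner, Matrix.mul_add, Matrix.mul_sub, Matrix.mul_smul, Matrix.trace_add,
      Matrix.trace_sub, Matrix.trace_smul, smul_eq_mul]
  -- expansion of the squared norm
  have hS : vnorm (calA A ((X - α • D) * (X - α • D)ᵀ - Mstar)) ^ 2
      = sa - 2*α*sab + (α^2*sb + 2*α^2*sac) - 2*α^3*sbc + α^4*sc := by
    rw [vnorm_sq]
    calc ∑ i, (calA A ((X - α • D) * (X - α • D)ᵀ - Mstar) i) ^ 2
        = ∑ i, (a i ^ 2 - 2*α*(a i * b i) + (α^2*(b i ^2) + 2*α^2*(a i * c i))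
            - 2*α^3*(b i * c i) + α^4*(c i ^ 2)) :=
          Finset.sum_congr rfl (fun i _ => by rw [hcal i]; ring)
      _ = sa - 2*α*sab + (α^2*sb + 2*α^2*sac) - 2*α^3*sbc + α^4*sc := by
          rw [hsa, hsb, hsc, hsab, hsac, hsbc]
          simp only [Finset.sum_add_distrib, Finset.sum_sub_distrib, ← Finset.mul_sum]
  -- gradient identity
  have hgrad : finner (gradfc A Mstar X) D = (2 / (m:ℝ)) * sab := by
    rw [gradfc, finner_smul_left, finner_sum_left]
    simp only [← hE]
    have hterm : ∀ i : Fin m, finner (finner (A i) E • (A i * X)) D = a i * (b i / 2) := by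
      intro i
      rw [finner_smul_left]
      have hbi : b i = 2 * finner (A i * X) D := by
        rw [hb, hB]; exact finner_sym2 (A i) (hA i) X D
      rw [hbi, ha]
      simp [calA]
    simp only [hterm]
    rw [hsab, Finset.mul_sum, Finset.mul_sum]
    exact Finset.sum_congr rfl fun i _ => by ring
  -- rank bounds
  have hrankB : B.rank ≤ 2 * r := by
    have hBeq : B = fromCols X D * fromRows Dᵀ Xᵀ := by
      rw [fromCols_mul_fromRows, hB]
    calc B.rank ≤ (fromCols X D).rank := by rw [hBeq]; exact Matrix.rank_mul_le_left _ _
      _ ≤ Fintype.card (Fin r ⊕ Fin r) := Matrix.rank_le_card_width _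
      _ = 2 * r := by simp [two_mul]
  have hrankC : C.rank ≤ 2 * r := by
    rw [hC]
    calc (D * Dᵀ).rank ≤ D.rank := Matrix.rank_mul_le_left _ _
      _ ≤ Fintype.card (Fin r) := Matrix.rank_le_card_width _
      _ ≤ 2 * r := by simp; omega
  -- RIP upper bounds
  have hBrip := (hrip B hrankB).2
  have hCrip := (hrip C hrankC).2
  rw [← hb, vnorm_sq, ← hsb] at hBrip
  rw [← hc, vnorm_sq, ← hsc] at hCrip
  have hFBnn : 0 ≤ FB := hFB ▸ fnorm_nonneg' _
  have hFDnn : 0 ≤ FD := hFD ▸ fnorm_nonneg' _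
  have hCF : fnorm C ≤ FD ^ 2 := by rw [hC, hFD]; exact fnorm_mul_transpose_le D
  have hcbound : (1 / (m:ℝ)) * sc ≤ (1 + δ) * (FD ^ 2) ^ 2 := by
    refine hCrip.trans ?_
    have : fnorm C ^ 2 ≤ (FD ^ 2) ^ 2 := by
      apply pow_le_pow_left₀ (fnorm_nonneg' _) hCF
    nlinarith
  -- Cauchy-Schwarz bound on sbc
  have hsbnn : 0 ≤ sb := hsb ▸ Finset.sum_nonneg fun i _ => sq_nonneg _
  have hscnn : 0 ≤ sc := hsc ▸ Finset.sum_nonneg fun i _ => sq_nonneg _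
  have hcs : sbc ^ 2 ≤ sb * sc := by
    rw [hsbc, hsb, hsc]; exact Finset.sum_mul_sq_le_sq_mul_sq _ _ _
  have hsb' : sb ≤ (m:ℝ) * ((1 + δ) * FB ^ 2) := by
    rw [hFB]
    calc sb = (m:ℝ) * (1 / (m:ℝ) * sb) := by field_simp
      _ ≤ (m:ℝ) * ((1 + δ) * fnorm B ^ 2) := mul_le_mul_of_nonneg_left hBrip (le_of_lt hmR)
  have hsc' : sc ≤ (m:ℝ) * ((1 + δ) * (FD ^ 2) ^ 2) := by
    calc sc = (m:ℝ) * (1 / (m:ℝ) * sc) := by field_simp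
      _ ≤ (m:ℝ) * ((1 + δ) * (FD ^ 2) ^ 2) := mul_le_mul_of_nonneg_left hcbound (le_of_lt hmR)
  have hbc : -((1 / (m:ℝ)) * sbc) ≤ (1 + δ) * FB * FD ^ 2 := by
    have hnegs : -sbc ≤ Real.sqrt (sb * sc) := by
      have h2 : |sbc| ≤ Real.sqrt (sb * sc) := by
        rw [← Real.sqrt_sq_eq_abs]; exact Real.sqrt_le_sqrt hcs
      linarith [neg_le_abs sbc]
    have hsqle : Real.sqrt (sb * sc) ≤ (m:ℝ) * ((1 + δ) * FB * FD ^ 2) := by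
      have hR : (0:ℝ) ≤ (m:ℝ) * ((1 + δ) * FB * FD ^ 2) := by positivity
      rw [show (m:ℝ) * ((1 + δ) * FB * FD ^ 2)
          = Real.sqrt (((m:ℝ) * ((1 + δ) * FB * FD ^ 2)) ^ 2) from (Real.sqrt_sq hR).symm]
      apply Real.sqrt_le_sqrt
      calc sb * sc ≤ ((m:ℝ) * ((1 + δ) * FB ^ 2)) * ((m:ℝ) * ((1 + δ) * (FD ^ 2) ^ 2)) :=
          mul_le_mul hsb' hsc' hscnn (by positivity)
        _ = ((m:ℝ) * ((1 + δ) * FB * FD ^ 2)) ^ 2 := by ring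
    have hfin : -sbc ≤ (m:ℝ) * ((1 + δ) * FB * FD ^ 2) := hnegs.trans hsqle
    calc -((1/(m:ℝ)) * sbc) = (1/(m:ℝ)) * (-sbc) := by ring
      _ ≤ (1/(m:ℝ)) * ((m:ℝ) * ((1 + δ) * FB * FD ^ 2)) :=
          mul_le_mul_of_nonneg_left hfin (by positivity)
      _ = (1 + δ) * FB * FD ^ 2 := by field_simp
  -- final assembly
  have hBc : fnorm (D * Xᵀ + X * Dᵀ) = FB := by rw [hFB, hB, add_comm (D * Xᵀ)]
  have hfc1 : fc A Mstar (X - α • D)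
      = (1/(m:ℝ)) * (sa - 2*α*sab + (α^2*sb + 2*α^2*sac) - 2*α^3*sbc + α^4*sc) := by
    rw [fc, hS]
  have hfc0 : fc A Mstar X = (1/(m:ℝ)) * sa := by
    rw [fc, ← hE, ← ha, vnorm_sq, hsa]
  have hQ1 : vnorm b ^ 2 = sb := by rw [vnorm_sq, hsb]
  have hQ2 : vinner a c = sac := by
    show (∑ i, a i * c i) = sac
    exact hsac.symm
  rw [hfc1, hfc0, hgrad, hQ1, hQ2, hBc]
  have h1 := mul_le_mul_of_nonneg_left hbc (by positivity : (0:ℝ) ≤ 2*α^3)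
  have h2 := mul_le_mul_of_nonneg_left hcbound (by positivity : (0:ℝ) ≤ α^4)
  ring_nf at h1 h2 ⊢
  linarith [h1, h2]


end
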